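/- (Uniform H^1 bound) Let V_k ∈ L^1(ℝ) ∩ L^∞(ℝ) for k = 1,…,N, with distinct points y_k ∈ ℝ and exponents μ_k > 0, and assume for each k either V_k ≥ 0 or μ_k < 1. Let ψ^ε(t) be the global H^1 solution of i∂_t ψ^ε = −Δψ^ε + ∑_k ε^{-1} V_k((x−y_k)/ε) |ψ^ε|^{2μ_k} ψ^ε with initial datum ψ₀ ∈ H^1(ℝ). Then there is a constant c, independent of ε ∈ (0,1] and t ∈ ℝ, such that ‖ψ^ε(t)‖_{H^1} ≤ c. -/

import Mathlib

open MeasureTheory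
open scoped ENNReal

noncomputable def L2norm (f : ℝ → ℂ) : ℝ := (eLpNorm f 2 volume).toReal

noncomputable def H1norm (f g : ℝ → ℂ) : ℝ := Real.sqrt (L2norm f ^ 2 + L2norm g ^ 2)

/-- `f` is (the continuous representative of) an `H¹(ℝ)` function with weak
derivative `g`: both are in `L²` and `f` is the integral of `g`. -/
def IsH1 (f g : ℝ → ℂ) : Prop :=
  MemLp f 2 volume ∧ MemLp g 2 volume ∧ ∀ x y : ℝ, f y - f x = ∫ t in x..y, g t

/-- The free Schrödinger kernel `U(t,x) = (4πit)^{-1/2} e^{ix²/(4t)}`. -/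
noncomputable def freeK (t x : ℝ) : ℂ :=
  (4 * Real.pi * Complex.I * t) ^ (-(1/2 : ℂ)) * Complex.exp (Complex.I * x ^ 2 / (4 * t))

/-- ψ is an H¹ (Duhamel/integral) solution of the rescaled NLS
i∂ₜψ = −Δψ + ∑ₖ ε⁻¹ Vₖ((x−yₖ)/ε)|ψ|^{2μₖ}ψ with datum ψ0. -/
def RescaledSol (N : ℕ) (V : Fin N → ℝ → ℝ) (y : Fin N → ℝ) (μ : Fin N → ℝ)
    (ε : ℝ) (ψ0 : ℝ → ℂ) (ψ : ℝ → ℝ → ℂ) : Prop :=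
  ψ 0 = ψ0 ∧ ∀ t : ℝ, 0 < t → ∀ x : ℝ,
    ψ t x = (∫ z, freeK t (x - z) * ψ0 z)
      - Complex.I * ∑ k, ∫ s in (0 : ℝ)..t, ∫ z,
          freeK (t - s) (x - z) *
            Complex.ofReal (ε⁻¹ * V k ((z - y k) / ε) * ‖ψ s z‖ ^ (2 * μ k)) * ψ s z

/-- ψ is an H¹ (Duhamel/integral) solution of the NLS with pointlike
nonlinearities of strengths αₖ at the points yₖ. -/
def LimitSol (N : ℕ) (α : Fin N → ℝ) (y : Fin N → ℝ) (μ : Fin N → ℝ)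
    (ψ0 : ℝ → ℂ) (ψ : ℝ → ℝ → ℂ) : Prop :=
  ψ 0 = ψ0 ∧ ∀ t : ℝ, 0 < t → ∀ x : ℝ,
    ψ t x = (∫ z, freeK t (x - z) * ψ0 z)
      - Complex.I * ∑ k, (α k : ℂ) * ∫ s in (0 : ℝ)..t,
          freeK (t - s) (x - y k) * Complex.ofReal (‖ψ s (y k)‖ ^ (2 * μ k)) * ψ s (y k)

/-- The conserved energy of the rescaled problem. -/
noncomputable def Eres (N : ℕ) (V : Fin N → ℝ → ℝ) (y : Fin N → ℝ) (μ : Fin N → ℝ)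
    (ε : ℝ) (ψ dψ : ℝ → ℂ) : ℝ :=
  (∫ x, ‖dψ x‖ ^ 2) +
    ∑ k, (μ k + 1)⁻¹ * ∫ x, ε⁻¹ * V k ((x - y k) / ε) * ‖ψ x‖ ^ (2 * μ k + 2)

lemma sq_integrable {f : ℝ → ℂ} (hf : MemLp f 2 volume) :
    Integrable (fun x => ‖f x‖ ^ 2) volume := by
  have := hf.integrable_norm_rpow (by norm_num) (by norm_num)
  simpa [ENNReal.toReal_ofNat, Real.rpow_natCast] using this

lemma L2norm_sq {f : ℝ → ℂ} (hf : MemLp f 2 volume) :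
    ∫ x, ‖f x‖ ^ 2 = L2norm f ^ 2 := by
  have h := hf.eLpNorm_eq_integral_rpow_norm (by norm_num) (by norm_num)
  have hI : (0:ℝ) ≤ ∫ a, ‖f a‖ ^ (2:ℝ≥0∞).toReal := by positivity
  have hint : (fun a => ‖f a‖ ^ (2:ℝ≥0∞).toReal) = fun a => ‖f a‖ ^ 2 := by
    ext a
    rw [show (2:ℝ≥0∞).toReal = ((2:ℕ):ℝ) by norm_num, Real.rpow_natCast]
  rw [L2norm, h, ENNReal.toReal_ofReal (by positivity), ← Real.rpow_natCast _ 2,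
    ← Real.rpow_mul hI, hint] at *
  norm_num

lemma L2norm_nonneg (f : ℝ → ℂ) : 0 ≤ L2norm f := ENNReal.toReal_nonneg

lemma intInt {g : ℝ → ℂ} (hg : MemLp g 2 volume) (a b : ℝ) :
    IntervalIntegrable g volume a b := by
  rw [intervalIntegrable_iff]
  refine Integrable.mono' (g := fun x => (‖g x‖ ^ 2 + 1) / 2) ?_ hg.aestronglyMeasurable.restrict ?_
  · exact (((sq_integrable hg).integrableOn).add
      (integrableOn_const (by rw [Set.uIoc]; exact measure_Ioc_lt_top.ne))).div_const 2
  · refine Filter.Eventually.of_forall fun x => ?_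
    nlinarith [sq_nonneg (‖g x‖ - 1), norm_nonneg (g x)]

lemma IsH1.continuous {f g : ℝ → ℂ} (h : IsH1 f g) : Continuous f := by
  have hg := h.2.1
  have : f = fun y => f 0 + ∫ t in (0:ℝ)..y, g t := by
    ext y
    have := h.2.2 0 y
    linear_combination this
  rw [this]
  exact continuous_const.add (intervalIntegral.continuous_primitive (fun a b => intInt hg a b) 0)

lemma sup_bound {f g : ℝ → ℂ} (h : IsH1 f g) {L c : ℝ} (hL : 0 < L) (hc : 0 < c) (x : ℝ) :
    ‖f x‖ ≤ Real.sqrt L⁻¹ * L2norm f + (c * L2norm g ^ 2 + L / c) / 2 := by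
  have hf2 := sq_integrable h.1
  have hg2 := sq_integrable h.2.1
  -- min point on [x-L, x]
  obtain ⟨a, ha_mem, ha⟩ := (isCompact_Icc (a := x - L) (b := x)).exists_isMinOn
    ⟨x, by constructor <;> linarith⟩ (h.continuous.norm.continuousOn)
  have haL : x - L ≤ a := ha_mem.1
  have hax : a ≤ x := ha_mem.2
  -- bound on ‖f a‖
  have h1 : ‖f a‖ ^ 2 * L ≤ L2norm f ^ 2 := by
    have e1 : ∫ t in Set.Ioc (x - L) x, ‖f a‖ ^ 2 = ‖f a‖ ^ 2 * L := by
      rw [setIntegral_const, measureReal_def, Real.volume_Ioc, smul_eq_mul, mul_comm,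
        ENNReal.toReal_ofReal (by linarith)]
      ring_nf
    have e2 : ∫ t in Set.Ioc (x - L) x, ‖f a‖ ^ 2 ≤ ∫ t in Set.Ioc (x - L) x, ‖f t‖ ^ 2 := by
      refine setIntegral_mono_on (integrableOn_const measure_Ioc_lt_top.ne)
        hf2.integrableOn measurableSet_Ioc fun t ht => ?_
      exact pow_le_pow_left₀ (norm_nonneg _) (ha ⟨le_of_lt ht.1, ht.2⟩) 2
    have e3 : ∫ t in Set.Ioc (x - L) x, ‖f t‖ ^ 2 ≤ ∫ t, ‖f t‖ ^ 2 :=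
      setIntegral_le_integral hf2 (Filter.Eventually.of_forall fun t => by positivity)
    rw [← L2norm_sq h.1]
    linarith
  have hfa : ‖f a‖ ≤ Real.sqrt L⁻¹ * L2norm f := by
    have : ‖f a‖ ^ 2 ≤ L⁻¹ * L2norm f ^ 2 := by
      rw [le_inv_mul_iff₀ hL]
      linarith [h1]
    calc ‖f a‖ = Real.sqrt (‖f a‖ ^ 2) := (Real.sqrt_sq (norm_nonneg _)).symm
      _ ≤ Real.sqrt (L⁻¹ * L2norm f ^ 2) := Real.sqrt_le_sqrt this
      _ = Real.sqrt L⁻¹ * L2norm f := by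
          rw [Real.sqrt_mul (by positivity), Real.sqrt_sq (L2norm_nonneg f)]
  -- bound on ‖f x - f a‖
  have h2 : ‖f x - f a‖ ≤ (c * L2norm g ^ 2 + L / c) / 2 := by
    rw [h.2.2 a x]
    have hb1 : ‖∫ t in a..x, g t‖ ≤ ∫ t in a..x, ‖g t‖ :=
      intervalIntegral.norm_integral_le_integral_norm hax
    have hb2 : ∫ t in a..x, ‖g t‖ = ∫ t in Set.Ioc a x, ‖g t‖ :=
      intervalIntegral.integral_of_le hax
    have hmajint : IntegrableOn (fun t => (c * ‖g t‖ ^ 2 + c⁻¹) / 2) (Set.Ioc (x-L) x) volume :=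
      ((hg2.integrableOn.const_mul c).add (integrableOn_const measure_Ioc_lt_top.ne)).div_const 2
    have hb3 : ∫ t in Set.Ioc a x, ‖g t‖ ≤ ∫ t in Set.Ioc a x, (c * ‖g t‖ ^ 2 + c⁻¹) / 2 := by
      refine setIntegral_mono_on ?_ (hmajint.mono_set (Set.Ioc_subset_Ioc_left haL))
        measurableSet_Ioc fun t _ => ?_
      · exact ((intInt h.2.1 a x).1).norm
      · nlinarith [sq_nonneg (c * ‖g t‖ - 1), hc, mul_inv_cancel₀ hc.ne', norm_nonneg (g t)]
    have hb4 : ∫ t in Set.Ioc a x, (c * ‖g t‖ ^ 2 + c⁻¹) / 2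
        ≤ ∫ t in Set.Ioc (x-L) x, (c * ‖g t‖ ^ 2 + c⁻¹) / 2 := by
      refine setIntegral_mono_set hmajint
        (Filter.Eventually.of_forall fun t => by positivity)
        (HasSubset.Subset.eventuallyLE (Set.Ioc_subset_Ioc_left haL))
    have hb5 : ∫ t in Set.Ioc (x-L) x, (c * ‖g t‖ ^ 2 + c⁻¹) / 2
        ≤ (c * L2norm g ^ 2 + L / c) / 2 := by
      rw [integral_div, integral_add (hg2.integrableOn.const_mul c) (integrableOn_const measure_Ioc_lt_top.ne), integral_const_mul,
        setIntegral_const, measureReal_def, Real.volume_Ioc, smul_eq_mul,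
        ENNReal.toReal_ofReal (by linarith)]
      have : ∫ t in Set.Ioc (x-L) x, ‖g t‖ ^ 2 ≤ L2norm g ^ 2 := by
        rw [← L2norm_sq h.2.1]
        exact setIntegral_le_integral hg2 (Filter.Eventually.of_forall fun t => by positivity)
      have hxL : x - (x - L) = L := by ring
      rw [hxL]
      have : c * ∫ t in Set.Ioc (x-L) x, ‖g t‖ ^ 2 ≤ c * L2norm g ^ 2 :=
        mul_le_mul_of_nonneg_left this hc.le
      have hLc : L * c⁻¹ = L / c := by ring
      linarith [this]
    linarith [hb1, hb2 ▸ hb1, hb3, hb4, hb5]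
  calc ‖f x‖ = ‖f a + (f x - f a)‖ := by ring_nf
    _ ≤ ‖f a‖ + ‖f x - f a‖ := norm_add_le _ _
    _ ≤ _ := add_le_add hfa h2

lemma V_comp_integrable {V : ℝ → ℝ} (hVi : Integrable V volume) {ε : ℝ} (hε : 0 < ε) (yk : ℝ) :
    Integrable (fun x : ℝ => V ((x - yk) / ε)) volume := by
  have h1 : Integrable (fun u : ℝ => V (u / ε)) volume := hVi.comp_div hε.ne'
  exact h1.comp_sub_right yk

lemma V_comp_integral {V : ℝ → ℝ} {ε : ℝ} (hε : 0 < ε) (yk : ℝ) :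
    ∫ x : ℝ, V ((x - yk) / ε) = ε * ∫ u, V u := by
  rw [integral_sub_right_eq_self (fun u : ℝ => V (u / ε)) yk,
    MeasureTheory.Measure.integral_comp_div (fun u : ℝ => V u) ε, abs_of_pos hε, smul_eq_mul]

lemma pot_bound {V : ℝ → ℝ} (hVi : Integrable V volume) {f : ℝ → ℂ} {S : ℝ} (hS : 0 ≤ S)
    (hfS : ∀ x, ‖f x‖ ≤ S) {ε yk m : ℝ} (hε : 0 < ε) (hm : 0 ≤ m) :
    |∫ x, ε⁻¹ * V ((x - yk) / ε) * ‖f x‖ ^ m| ≤ (∫ x, |V x|) * S ^ m := by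
  have hmaj : Integrable (fun x : ℝ => ε⁻¹ * |V ((x - yk) / ε)| * S ^ m) volume :=
    ((V_comp_integrable hVi.abs hε yk).const_mul ε⁻¹).mul_const _
  have step1 : |∫ x, ε⁻¹ * V ((x - yk) / ε) * ‖f x‖ ^ m|
      ≤ ∫ x, |ε⁻¹ * V ((x - yk) / ε) * ‖f x‖ ^ m| := by
    simpa only [Real.norm_eq_abs] using MeasureTheory.norm_integral_le_integral_norm
      (μ := volume) (fun x => ε⁻¹ * V ((x - yk) / ε) * ‖f x‖ ^ m)
  have step2 : ∫ x, |ε⁻¹ * V ((x - yk) / ε) * ‖f x‖ ^ m|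
      ≤ ∫ x, ε⁻¹ * |V ((x - yk) / ε)| * S ^ m := by
    refine integral_mono_of_nonneg (Filter.Eventually.of_forall fun x => abs_nonneg _) hmaj
      (Filter.Eventually.of_forall fun x => ?_)
    dsimp only
    rw [abs_mul, abs_mul, abs_of_pos (inv_pos.2 hε),
      abs_of_nonneg (Real.rpow_nonneg (norm_nonneg _) m)]
    exact mul_le_mul_of_nonneg_left (Real.rpow_le_rpow (norm_nonneg _) (hfS x) hm)
      (by positivity)
  have step3 : ∫ x, ε⁻¹ * |V ((x - yk) / ε)| * S ^ m = (∫ x, |V x|) * S ^ m := by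
    have hrw : (fun x : ℝ => ε⁻¹ * |V ((x - yk) / ε)| * S ^ m)
        = fun x : ℝ => (ε⁻¹ * S ^ m) * |V ((x - yk) / ε)| := by ext x; ring
    rw [hrw, MeasureTheory.integral_const_mul, V_comp_integral (V := fun u => |V u|) hε yk]
    field_simp
  linarith

lemma young_rpow {x p δ : ℝ} (hx : 1 ≤ x) (hp : 0 ≤ p) (hp2 : p < 2) (hδ : 0 < δ) :
    x ^ p ≤ δ * x ^ (2:ℝ) + (δ⁻¹) ^ (p / (2 - p)) := by
  have hx0 : (0:ℝ) < x := lt_of_lt_of_le one_pos hx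
  by_cases hcase : δ⁻¹ ≤ x ^ (2 - p)
  · have h1 : x ^ p * δ⁻¹ ≤ x ^ p * x ^ (2 - p) :=
      mul_le_mul_of_nonneg_left hcase (Real.rpow_nonneg hx0.le p)
    rw [← Real.rpow_add hx0] at h1
    have h2 : p + (2 - p) = 2 := by ring
    rw [h2] at h1
    have h3 : x ^ p ≤ x ^ (2:ℝ) * δ := by
      have h4 := mul_le_mul_of_nonneg_right h1 hδ.le
      rwa [mul_assoc, inv_mul_cancel₀ hδ.ne', mul_one] at h4
    have h5 : (0:ℝ) ≤ (δ⁻¹) ^ (p / (2 - p)) := Real.rpow_nonneg (inv_nonneg.2 hδ.le) _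
    linarith
  · push_neg at hcase
    have h1 : x ^ p = (x ^ (2 - p)) ^ (p / (2 - p)) := by
      rw [← Real.rpow_mul hx0.le]
      congr 1
      have hq : (2:ℝ) - p ≠ 0 := by linarith
      field_simp
    have h2 : (x ^ (2 - p)) ^ (p / (2 - p)) ≤ (δ⁻¹) ^ (p / (2 - p)) :=
      Real.rpow_le_rpow (Real.rpow_nonneg hx0.le _) hcase.le (div_nonneg hp (by linarith))
    have h3 : 0 ≤ δ * x ^ (2:ℝ) := by positivity
    linarith [h1 ▸ h2]

set_option maxHeartbeats 1000000 in
/-- Uniform H¹ a priori bound: the solutions ψ^ε of the rescaled NLS, conserving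
mass and energy, are bounded in H¹ uniformly in ε ∈ (0,1] and t ∈ ℝ, provided
for each k either V_k ≥ 0 or μ_k < 1. -/
theorem uniform_H1_bound (N : ℕ) (hN : 1 ≤ N) (V : Fin N → ℝ → ℝ) (y : Fin N → ℝ)
    (μ : Fin N → ℝ)
    (hV : ∀ k, Integrable (V k) ∧ ∃ C : ℝ, ∀ x, |V k x| ≤ C)
    (hy : Function.Injective y) (hμ : ∀ k, 0 < μ k)
    (hsign : ∀ k, (∀ x, 0 ≤ V k x) ∨ μ k < 1)
    (ψ0 dψ0 : ℝ → ℂ) (hψ0 : IsH1 ψ0 dψ0)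
    (ψ dψ : ℝ → ℝ → ℝ → ℂ)
    (hsol : ∀ ε ∈ Set.Ioc (0 : ℝ) 1, RescaledSol N V y μ ε ψ0 (ψ ε))
    (hH1 : ∀ ε ∈ Set.Ioc (0 : ℝ) 1, ∀ t : ℝ, IsH1 (ψ ε t) (dψ ε t))
    (hmass : ∀ ε ∈ Set.Ioc (0 : ℝ) 1, ∀ t : ℝ, L2norm (ψ ε t) = L2norm ψ0)
    (henergy : ∀ ε ∈ Set.Ioc (0 : ℝ) 1, ∀ t : ℝ,
      Eres N V y μ ε (ψ ε t) (dψ ε t) = Eres N V y μ ε ψ0 dψ0) :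
    ∃ c : ℝ, ∀ ε ∈ Set.Ioc (0 : ℝ) 1, ∀ t : ℝ, H1norm (ψ ε t) (dψ ε t) ≤ c := by
  classical
  have hNpos : (0:ℝ) < N := by exact_mod_cast Nat.lt_of_lt_of_le Nat.zero_lt_one hN
  have hM0 : 0 ≤ L2norm ψ0 := L2norm_nonneg _
  have hI0 : ∀ k, (0:ℝ) ≤ ∫ x, |V k x| := fun k => integral_nonneg fun x => abs_nonneg _
  have hμ1 : ∀ k, (0:ℝ) < μ k + 1 := fun k => by linarith [hμ k]
  have hm0 : ∀ k, (0:ℝ) ≤ 2 * μ k + 2 := fun k => by linarith [hμ k]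
  -- uniform sup bound for ψ0
  obtain ⟨S0, hS0def⟩ : ∃ S0 : ℝ,
      S0 = Real.sqrt 1⁻¹ * L2norm ψ0 + (1 * L2norm dψ0 ^ 2 + 1 / 1) / 2 := ⟨_, rfl⟩
  have hS0 : ∀ x, ‖ψ0 x‖ ≤ S0 := fun x => hS0def ▸ sup_bound hψ0 one_pos one_pos x
  have hS0nn : 0 ≤ S0 := le_trans (norm_nonneg _) (hS0 0)
  -- uniform bound on the initial energy
  obtain ⟨A, hAdef⟩ : ∃ A : ℝ, A = L2norm dψ0 ^ 2
      + ∑ k, (μ k + 1)⁻¹ * ((∫ x, |V k x|) * S0 ^ (2 * μ k + 2)) := ⟨_, rfl⟩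
  have hE0 : ∀ ε ∈ Set.Ioc (0:ℝ) 1, Eres N V y μ ε ψ0 dψ0 ≤ A := by
    intro ε hε
    rw [Eres, L2norm_sq hψ0.2.1, hAdef]
    refine (add_le_add_iff_left _).2 (Finset.sum_le_sum fun k _ => ?_)
    refine mul_le_mul_of_nonneg_left ?_ (inv_nonneg.2 (hμ1 k).le)
    exact le_trans (le_abs_self _) (pot_bound (hV k).1 hS0nn hS0 hε.1 (hm0 k))
  -- Young-type bound on the negative part of the potential energy at time t
  have hYoung : ∀ k : Fin N, ∃ K : ℝ, 0 ≤ K ∧ ∀ ε ∈ Set.Ioc (0:ℝ) 1, ∀ t : ℝ,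
      -((μ k + 1)⁻¹ * ∫ x, ε⁻¹ * V k ((x - y k) / ε) * ‖ψ ε t x‖ ^ (2 * μ k + 2))
        ≤ (4 * (N:ℝ))⁻¹ * (1 + L2norm (dψ ε t)) ^ 2 + K := by
    intro k
    by_cases hk : ∀ x, 0 ≤ V k x
    · refine ⟨0, le_refl _, fun ε hε t => ?_⟩
      have hT : 0 ≤ (μ k + 1)⁻¹ * ∫ x, ε⁻¹ * V k ((x - y k) / ε) * ‖ψ ε t x‖ ^ (2 * μ k + 2) := by
        refine mul_nonneg (inv_nonneg.2 (hμ1 k).le) (integral_nonneg fun x => ?_)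
        have := hk ((x - y k) / ε)
        have hε0 := hε.1
        positivity
      have hsq : 0 ≤ (4 * (N:ℝ))⁻¹ * (1 + L2norm (dψ ε t)) ^ 2 := by positivity
      linarith
    · have hμk1 : μ k < 1 := (hsign k).resolve_left hk
      obtain ⟨p, hpdef⟩ : ∃ p : ℝ, p = μ k + 1 := ⟨_, rfl⟩
      have hppos : 0 < p := by rw [hpdef]; exact hμ1 k
      have hp0 : 0 ≤ p := hppos.le
      have hp2 : p < 2 := by rw [hpdef]; linarith
      obtain ⟨b, hbdef⟩ : ∃ b : ℝ,
          b = p⁻¹ * ((∫ x, |V k x|) * (L2norm ψ0 + 1) ^ (2 * μ k + 2)) := ⟨_, rfl⟩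
      have hb0 : 0 ≤ b := by
        rw [hbdef]
        refine mul_nonneg (inv_nonneg.2 hp0)
          (mul_nonneg (hI0 k) (Real.rpow_nonneg (by linarith) _))
      obtain ⟨δ, hδdef⟩ : ∃ δ : ℝ, δ = (4 * (N:ℝ) * (b + 1))⁻¹ := ⟨_, rfl⟩
      have h4N : (0:ℝ) < 4 * (N:ℝ) * (b + 1) := by nlinarith
      have hδpos : 0 < δ := by rw [hδdef]; exact inv_pos.2 h4N
      refine ⟨b * δ⁻¹ ^ (p / (2 - p)),
        mul_nonneg hb0 (Real.rpow_nonneg (inv_nonneg.2 hδpos.le) _), fun ε hε t => ?_⟩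
      rw [← hpdef]
      have hε0 : (0:ℝ) < ε := hε.1
      have h1 := hH1 ε hε t
      obtain ⟨D, hDdef⟩ : ∃ D : ℝ, D = L2norm (dψ ε t) := ⟨_, rfl⟩
      rw [← hDdef]
      have hD0 : 0 ≤ D := hDdef ▸ L2norm_nonneg _
      have hD1 : (0:ℝ) < 1 + D := by linarith
      obtain ⟨s, hsdef⟩ : ∃ s : ℝ, s = Real.sqrt (1 + D) := ⟨_, rfl⟩
      have hs2 : s ^ 2 = 1 + D := by rw [hsdef]; exact Real.sq_sqrt hD1.le
      have hs0 : 0 < s := by rw [hsdef]; exact Real.sqrt_pos.2 hD1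
      -- sup bound at time t
      have hSt : ∀ x, ‖ψ ε t x‖ ≤ (L2norm ψ0 + 1) * s := by
        intro x
        have hLpos : (0:ℝ) < (1 + D)⁻¹ := by positivity
        have hcpos : (0:ℝ) < ((1 + D) * s)⁻¹ := by positivity
        have hb1 := sup_bound h1 hLpos hcpos x
        rw [inv_inv, hmass ε hε t, ← hDdef, ← hsdef] at hb1
        have e1 : (1 + D)⁻¹ / ((1 + D) * s)⁻¹ = s := by field_simp
        have e2 : ((1 + D) * s)⁻¹ * D ^ 2 ≤ s := by
          rw [inv_mul_le_iff₀ (by positivity)]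
          nlinarith
        have hM0' := hM0
        nlinarith [hb1]
      have hStnn : 0 ≤ (L2norm ψ0 + 1) * s := by positivity
      -- convert the sup bound into a bound on the potential term
      have hpot : |∫ x, ε⁻¹ * V k ((x - y k) / ε) * ‖ψ ε t x‖ ^ (2 * μ k + 2)|
          ≤ (∫ x, |V k x|) * ((L2norm ψ0 + 1) * s) ^ (2 * μ k + 2) :=
        pot_bound (hV k).1 hStnn hSt hε0 (hm0 k)
      have hrw : ((L2norm ψ0 + 1) * s) ^ (2 * μ k + 2)
          = (L2norm ψ0 + 1) ^ (2 * μ k + 2) * (1 + D) ^ p := by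
        rw [hsdef, Real.mul_rpow (by linarith) (Real.sqrt_nonneg _)]
        congr 1
        rw [Real.sqrt_eq_rpow, ← Real.rpow_mul hD1.le]
        congr 1
        rw [hpdef]; ring
      obtain ⟨Q, hQdef⟩ : ∃ Q : ℝ,
          Q = ∫ x, ε⁻¹ * V k ((x - y k) / ε) * ‖ψ ε t x‖ ^ (2 * μ k + 2) := ⟨_, rfl⟩
      rw [← hQdef]
      rw [← hQdef] at hpot
      have hTa : -(p⁻¹ * Q) ≤ p⁻¹ * |Q| := by
        have h' := mul_le_mul_of_nonneg_left (neg_abs_le Q) (inv_nonneg.2 hp0)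
        linarith [h']
      have hQb : p⁻¹ * |Q| ≤ b * (1 + D) ^ p := by
        calc p⁻¹ * |Q|
            ≤ p⁻¹ * ((∫ x, |V k x|) * ((L2norm ψ0 + 1) ^ (2 * μ k + 2) * (1 + D) ^ p)) := by
              refine mul_le_mul_of_nonneg_left ?_ (inv_nonneg.2 hp0)
              refine le_trans hpot (le_of_eq ?_)
              rw [hrw]
          _ = b * (1 + D) ^ p := by rw [hbdef]; ring
      have hY := young_rpow (x := 1 + D) (by linarith) hp0 hp2 hδpos
      have hbY : b * (1 + D) ^ p ≤ b * δ * (1 + D) ^ (2:ℝ) + b * δ⁻¹ ^ (p / (2 - p)) :=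
        calc b * (1 + D) ^ p ≤ b * (δ * (1 + D) ^ (2:ℝ) + δ⁻¹ ^ (p / (2 - p))) :=
              mul_le_mul_of_nonneg_left hY hb0
          _ = b * δ * (1 + D) ^ (2:ℝ) + b * δ⁻¹ ^ (p / (2 - p)) := by ring
      have hbδ : b * δ ≤ (4 * (N:ℝ))⁻¹ := by
        rw [hδdef, show b * (4 * (N:ℝ) * (b + 1))⁻¹ = b / (4 * (N:ℝ) * (b + 1)) from
          (div_eq_mul_inv _ _).symm,
          inv_eq_one_div, div_le_div_iff₀ h4N (by linarith)]
        nlinarith [hNpos, hb0]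
      have hfin : b * δ * (1 + D) ^ (2:ℝ) ≤ (4 * (N:ℝ))⁻¹ * (1 + D) ^ (2:ℝ) :=
        mul_le_mul_of_nonneg_right hbδ (Real.rpow_nonneg hD1.le _)
      have h2cast : (1 + D) ^ (2:ℝ) = (1 + D) ^ 2 := by
        rw [show (2:ℝ) = ((2:ℕ):ℝ) by norm_num, Real.rpow_natCast]
      rw [h2cast] at hfin hbY
      linarith
  choose K hK0 hK using hYoung
  have hkey : ∀ ε ∈ Set.Ioc (0:ℝ) 1, ∀ t : ℝ,
      L2norm (dψ ε t) ^ 2 ≤ 2 * (A + ∑ k, K k) + 1 := by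
    intro ε hε t
    have h1 := hH1 ε hε t
    have hE := henergy ε hε t
    simp only [Eres] at hE
    have hE0' := hE0 ε hε
    simp only [Eres] at hE0'
    have hDsq : L2norm (dψ ε t) ^ 2 = ∫ x, ‖dψ ε t x‖ ^ 2 := (L2norm_sq h1.2.1).symm
    have hsum : -∑ k, ((μ k + 1)⁻¹ * ∫ x, ε⁻¹ * V k ((x - y k) / ε) * ‖ψ ε t x‖ ^ (2 * μ k + 2))
        ≤ ∑ k : Fin N, ((4 * (N:ℝ))⁻¹ * (1 + L2norm (dψ ε t)) ^ 2 + K k) := by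
      rw [← Finset.sum_neg_distrib]
      exact Finset.sum_le_sum fun k _ => hK k ε hε t
    rw [Finset.sum_add_distrib, Finset.sum_const, Finset.card_univ, Fintype.card_fin] at hsum
    have hquarter : (N:ℕ) • ((4 * (N:ℝ))⁻¹ * (1 + L2norm (dψ ε t)) ^ 2)
        = (1 + L2norm (dψ ε t)) ^ 2 / 4 := by
      rw [nsmul_eq_mul]
      field_simp
    rw [hquarter] at hsum
    have e1 : L2norm (dψ ε t) ^ 2
        ≤ A + (1 + L2norm (dψ ε t)) ^ 2 / 4 + ∑ k, K k := by linarith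
    nlinarith [sq_nonneg (1 - L2norm (dψ ε t)), e1]
  refine ⟨Real.sqrt (L2norm ψ0 ^ 2 + (2 * (A + ∑ k, K k) + 1)), fun ε hε t => ?_⟩
  rw [H1norm, hmass ε hε t]
  exact Real.sqrt_le_sqrt (by linarith [hkey ε hε t])
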